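/- Let E ⊂ ℝ^d be a bounded Lipschitz domain and c₂ > 0. Then there exist ε₀ > 0 and c₃ > 0 (depending on d, E, c₂) such that for all s ∈ (0,1], all ε ∈ (0,ε₀), and all x ∈ closure(E): (1/ε) ∫_{E_ε} s^{-d/2} exp(−c₂|x−y|²/s) dy ≤ c₃/√s, where E_ε = {y ∈ E : dist(y, ∂E) < ε} is the inner collar of width ε. -/

import Mathlib

open MeasureTheory Set Filter Metric

/-- `E ⊆ ℝ^d` is a bounded Lipschitz domain: a bounded connected open set whose
boundary is locally, after a rigid motion, the region above the graph of a
Lipschitz function of `d-1` variables. -/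
def IsBoundedLipschitzDomain (d : ℕ) (E : Set (EuclideanSpace ℝ (Fin d))) : Prop :=
  IsOpen E ∧ Bornology.IsBounded E ∧ IsConnected E ∧
  ∀ x ∈ frontier E, ∃ r > (0 : ℝ),
    ∃ (O : EuclideanSpace ℝ (Fin d) ≃ᵢ EuclideanSpace ℝ (Fin d))
      (φ : (Fin (d - 1) → ℝ) → ℝ) (L : NNReal), LipschitzWith L φ ∧
      ∃ h : d - 1 < d, ∀ y ∈ Metric.ball x r,
        (y ∈ E ↔ φ (fun i => O y (i.castLE (Nat.sub_le d 1))) < O y ⟨d - 1, h⟩)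

-- coordinate bound in EuclideanSpace
lemma coord_le {d : ℕ} (z w : EuclideanSpace ℝ (Fin d)) (i : Fin d) : |z i - w i| ≤ dist z w := by
  rw [EuclideanSpace.dist_eq]
  rw [show |z i - w i| = Real.sqrt ((z i - w i)^2) from (Real.sqrt_sq_eq_abs _).symm]
  apply Real.sqrt_le_sqrt
  calc (z i - w i)^2 = dist (z i) (w i) ^ 2 := by rw [Real.dist_eq, sq_abs]
    _ ≤ ∑ j, dist (z j) (w j) ^ 2 :=
      Finset.single_le_sum (f := fun j => dist (z j) (w j) ^ 2) (fun j _ => sq_nonneg _) (Finset.mem_univ i)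

-- isometry equiv is measure preserving
lemma isoMP {d : ℕ} (O : EuclideanSpace ℝ (Fin d) ≃ᵢ EuclideanSpace ℝ (Fin d)) :
    MeasurePreserving O volume volume := by
  have h : (O : EuclideanSpace ℝ (Fin d) → EuclideanSpace ℝ (Fin d))
      = (fun v => v + O 0) ∘ (O.toRealLinearIsometryEquiv : EuclideanSpace ℝ (Fin d) → EuclideanSpace ℝ (Fin d)) := by
    funext x
    simp [IsometryEquiv.toRealLinearIsometryEquiv_apply]
  rw [h]
  exact (measurePreserving_add_right volume (O 0)).comp O.toRealLinearIsometryEquiv.measurePreserving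

-- slab volume in pi space
lemma slab_vol (n : ℕ) (φ : (Fin n → ℝ) → ℝ) (hφ : Continuous φ) (a : ℝ) (c : Fin n → ℝ) (r : ℝ) :
    volume {z : Fin (n+1) → ℝ | (fun j : Fin n => z j.castSucc) ∈ closedBall c r ∧
      z (Fin.last n) - φ (fun j => z j.castSucc) ∈ Ioc 0 a} ≤ ENNReal.ofReal (a * (2*r)^n) := by
  rcases le_or_gt 0 r with hr | hr
  rcases le_or_gt 0 a with ha | ha
  · set e := MeasurableEquiv.piFinSuccAbove (fun _ : Fin (n+1) => ℝ) (Fin.last n) with he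
    set Q : Set (ℝ × (Fin n → ℝ)) :=
      {p | p.2 ∈ closedBall c r ∧ p.1 - φ p.2 ∈ Ioc 0 a} with hQ
    have hQm : MeasurableSet Q := by
      apply MeasurableSet.inter
      · exact measurable_snd (measurableSet_closedBall)
      · exact ((measurable_fst.sub (hφ.measurable.comp measurable_snd))) measurableSet_Ioc
    have hset : {z : Fin (n+1) → ℝ | (fun j : Fin n => z j.castSucc) ∈ closedBall c r ∧
        z (Fin.last n) - φ (fun j => z j.castSucc) ∈ Ioc 0 a} = e ⁻¹' Q := by
      ext z
      simp only [mem_setOf_eq, mem_preimage, he, hQ, MeasurableEquiv.piFinSuccAbove_apply]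
      simp [Fin.removeNth, Fin.succAbove_last, Fin.init]
      exact Iff.rfl
    rw [hset, (volume_preserving_piFinSuccAbove (fun _ : Fin (n+1) => ℝ) (Fin.last n)).measure_preimage hQm.nullMeasurableSet]
    have hprod : (volume : Measure (ℝ × (Fin n → ℝ))) Q
        = ∫⁻ y, volume ((fun x => (x, y)) ⁻¹' Q) := by
      exact Measure.prod_apply_symm hQm
    rw [hprod]
    have hslice : ∀ y : Fin n → ℝ, volume ((fun x => (x, y)) ⁻¹' Q)
        = (closedBall c r).indicator (fun _ => ENNReal.ofReal a) y := by
      intro y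
      by_cases hy : y ∈ closedBall c r
      · have : (fun x => (x, y)) ⁻¹' Q = Ioc (φ y) (φ y + a) := by
          ext x
          simp only [mem_preimage, hQ, mem_setOf_eq, mem_Ioc, hy, true_and]
          constructor
          · rintro ⟨h1, h2⟩; constructor <;> linarith
          · rintro ⟨h1, h2⟩; constructor <;> linarith
        rw [this, indicator_of_mem hy, Real.volume_Ioc]
        congr 1; ring
      · have : (fun x => (x, y)) ⁻¹' Q = ∅ := by
          ext x
          simp only [mem_preimage, hQ, mem_setOf_eq, mem_empty_iff_false, iff_false, not_and]
          intro h; exact absurd h hy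
        rw [this, indicator_of_notMem hy]; simp
    simp_rw [hslice]
    rw [lintegral_indicator measurableSet_closedBall _, setLIntegral_const,
      Real.volume_pi_closedBall c hr]
    rw [← ENNReal.ofReal_mul ha, Fintype.card_fin]
  · -- a < 0 : set empty
    have : {z : Fin (n+1) → ℝ | (fun j : Fin n => z j.castSucc) ∈ closedBall c r ∧
        z (Fin.last n) - φ (fun j => z j.castSucc) ∈ Ioc 0 a} = ∅ := by
      ext z; simp only [mem_setOf_eq, mem_Ioc, mem_empty_iff_false, iff_false]
      rintro ⟨-, h1, h2⟩; linarith
    rw [this]; simp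
  · -- r < 0 : closedBall empty
    have : {z : Fin (n+1) → ℝ | (fun j : Fin n => z j.castSucc) ∈ closedBall c r ∧
        z (Fin.last n) - φ (fun j => z j.castSucc) ∈ Ioc 0 a} = ∅ := by
      ext z
      simp only [mem_setOf_eq, mem_empty_iff_false, iff_false, not_and]
      intro h; exact absurd h (by simp [closedBall_eq_empty.2 hr])
    rw [this]; simp

lemma chart_vol (n : ℕ) (O : EuclideanSpace ℝ (Fin (n+1)) ≃ᵢ EuclideanSpace ℝ (Fin (n+1)))
    (φ : (Fin n → ℝ) → ℝ) (hφ : Continuous φ) (a : ℝ) (x : EuclideanSpace ℝ (Fin (n+1))) (r : ℝ) :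
    volume {y : EuclideanSpace ℝ (Fin (n+1)) | y ∈ ball x r ∧
      O y (Fin.last n) - φ (fun j => O y j.castSucc) ∈ Ioc 0 a} ≤ ENNReal.ofReal (a * (2*r)^n) := by
  set c : Fin n → ℝ := fun j => O x j.castSucc with hc
  set P : Set (Fin (n+1) → ℝ) := {z | (fun j : Fin n => z j.castSucc) ∈ closedBall c r ∧
      z (Fin.last n) - φ (fun j => z j.castSucc) ∈ Ioc 0 a} with hP
  have hPm : MeasurableSet P := by
    apply MeasurableSet.inter
    · exact (measurable_pi_lambda _ fun j => measurable_pi_apply _) measurableSet_closedBall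
    · exact ((measurable_pi_apply _).sub
        (hφ.measurable.comp (measurable_pi_lambda _ fun j => measurable_pi_apply _))) measurableSet_Ioc
  have hsub : {y : EuclideanSpace ℝ (Fin (n+1)) | y ∈ ball x r ∧
      O y (Fin.last n) - φ (fun j => O y j.castSucc) ∈ Ioc 0 a}
      ⊆ O ⁻¹' ((MeasurableEquiv.toLp 2 (Fin (n+1) → ℝ)).symm ⁻¹' P) := by
    rintro y ⟨hyb, hIoc⟩
    have hr0 : 0 ≤ r := dist_nonneg.trans (le_of_lt (mem_ball.1 hyb))
    refine ⟨?_, hIoc⟩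
    rw [mem_closedBall]
    rw [dist_pi_le_iff hr0]
    intro j
    rw [Real.dist_eq]
    calc |O y j.castSucc - O x j.castSucc| ≤ dist (O y) (O x) := coord_le _ _ _
      _ = dist y x := O.dist_eq y x
      _ ≤ r := (mem_ball.1 hyb).le
  refine le_trans (measure_mono hsub) ?_
  rw [(isoMP O).measure_preimage (((MeasurableEquiv.toLp 2 (Fin (n+1) → ℝ)).symm.measurable hPm).nullMeasurableSet),
    (EuclideanSpace.volume_preserving_symm_measurableEquiv_toLp (Fin (n+1))).measure_preimage hPm.nullMeasurableSet]
  exact slab_vol n φ hφ a c r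

lemma collar_vol (n : ℕ) (E : Set (EuclideanSpace ℝ (Fin (n+1))))
    (hE : IsBoundedLipschitzDomain (n+1) E) :
    ∃ ε₀ > (0:ℝ), ∃ C > (0:ℝ), ∀ ε ∈ Ioo (0:ℝ) ε₀,
      ∀ (x : EuclideanSpace ℝ (Fin (n+1))) (r : ℝ),
      volume ({y ∈ E | infDist y (frontier E) < ε} ∩ ball x r) ≤ ENNReal.ofReal (C * ε * r^n) := by
  obtain ⟨hopen, hbd, hconn, hgraph⟩ := hE
  choose! R hR O φ L hLip hrest using hgraph
  have hiff : ∀ p ∈ frontier E, ∀ y ∈ ball p (R p),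
      (y ∈ E ↔ φ p (fun j => (O p) y j.castSucc) < (O p) y (Fin.last n)) :=
    fun p hp => (hrest p hp).2
  have hfc : IsCompact (frontier E) :=
    Metric.isCompact_of_isClosed_isBounded isClosed_frontier
      (hbd.closure.subset frontier_subset_closure)
  have hfne : (frontier E).Nonempty := by
    by_contra h
    rw [not_nonempty_iff_eq_empty] at h
    have hclopen : IsClopen E := isClopen_iff_frontier_eq_empty.2 h
    rcases isClopen_iff.1 hclopen with h1 | h1
    · exact hconn.nonempty.ne_empty h1
    · rw [h1] at hbd
      exact noncompact_univ (EuclideanSpace ℝ (Fin (n+1)))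
        (@isCompact_univ _ _ (compactSpace_iff_isBounded_univ.2 hbd))
  obtain ⟨t, htsub, htcov⟩ := hfc.elim_nhds_subcover (fun p => ball p (R p / 2))
    (fun p hp => ball_mem_nhds p (by have := hR p hp; linarith))
  have htne : t.Nonempty := by
    obtain ⟨w, hw⟩ := hfne
    have := htcov hw
    simp only [mem_iUnion, exists_prop] at this
    obtain ⟨p, hpt, -⟩ := this
    exact ⟨p, hpt⟩
  refine ⟨t.inf' htne (fun p => R p / 4), ?_, (∑ p ∈ t, (1 + (L p : ℝ)) * 2^n) + 1, ?_, ?_⟩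
  · exact (Finset.lt_inf'_iff htne).2 fun p hp => by have := hR p (htsub p hp); linarith
  · positivity
  rintro ε ⟨hε0, hεlt⟩ x r
  rcases le_or_gt r 0 with hr | hr
  · rw [ball_eq_empty.2 hr, inter_empty, measure_empty]; exact zero_le
  have key : {y ∈ E | infDist y (frontier E) < ε} ∩ ball x r ⊆
      ⋃ p ∈ t, {y : EuclideanSpace ℝ (Fin (n+1)) | y ∈ ball x r ∧
        (O p) y (Fin.last n) - φ p (fun j => (O p) y j.castSucc) ∈ Ioc 0 ((1 + (L p : ℝ)) * ε)} := by
    rintro y ⟨⟨hyE, hyd⟩, hyb⟩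
    obtain ⟨w, hwfr, hwd⟩ := (infDist_lt_iff hfne).1 hyd
    have hw2 := htcov hwfr
    simp only [mem_iUnion, exists_prop] at hw2
    obtain ⟨p, hpt, hwp⟩ := hw2
    have hpfr := htsub p hpt
    have hRp := hR p hpfr
    have hεRp : ε < R p / 4 := lt_of_lt_of_le hεlt (Finset.inf'_le _ hpt)
    rw [mem_ball] at hwp
    have hyp : y ∈ ball p (R p) := by
      rw [mem_ball]
      calc dist y p ≤ dist y w + dist w p := dist_triangle y w p
        _ < ε + R p / 2 := add_lt_add hwd hwp
        _ ≤ R p := by linarith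
    have hwp' : w ∈ ball p (R p) := by rw [mem_ball]; linarith
    have h1 : φ p (fun j => (O p) y j.castSucc) < (O p) y (Fin.last n) :=
      (hiff p hpfr y hyp).1 hyE
    have hwE : w ∉ E := by
      rw [hopen.frontier_eq] at hwfr; exact hwfr.2
    have h2 : (O p) w (Fin.last n) ≤ φ p (fun j => (O p) w j.castSucc) :=
      le_of_not_gt (fun hcon => hwE ((hiff p hpfr w hwp').2 hcon))
    have hdyw : dist ((O p) y) ((O p) w) = dist y w := (O p).dist_eq y w
    have hcoord : |(O p) y (Fin.last n) - (O p) w (Fin.last n)| ≤ dist y w := by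
      rw [← hdyw]; exact coord_le _ _ _
    have hproj : dist (fun j : Fin n => (O p) y j.castSucc) (fun j : Fin n => (O p) w j.castSucc) ≤ dist y w := by
      rw [← hdyw]
      exact (dist_pi_le_iff dist_nonneg).2 fun j => by
        rw [Real.dist_eq]; exact coord_le _ _ _
    have hφd : |φ p (fun j => (O p) y j.castSucc) - φ p (fun j => (O p) w j.castSucc)|
        ≤ (L p : ℝ) * dist y w := by
      refine le_trans ?_ (mul_le_mul_of_nonneg_left hproj (L p).coe_nonneg)
      rw [← Real.dist_eq]
      exact (hLip p hpfr).dist_le_mul _ _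
    have hL0 : (0:ℝ) ≤ L p := (L p).coe_nonneg
    have hmul : (1 + (L p : ℝ)) * dist y w ≤ (1 + (L p : ℝ)) * ε :=
      mul_le_mul_of_nonneg_left hwd.le (by positivity)
    have habs1 := abs_le.1 hcoord
    have habs2 := abs_le.1 hφd
    refine mem_iUnion₂.2 ⟨p, hpt, hyb, ?_, ?_⟩
    · linarith
    · nlinarith [hwd.le]
  calc volume ({y ∈ E | infDist y (frontier E) < ε} ∩ ball x r)
      ≤ volume (⋃ p ∈ t, {y : EuclideanSpace ℝ (Fin (n+1)) | y ∈ ball x r ∧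
        (O p) y (Fin.last n) - φ p (fun j => (O p) y j.castSucc) ∈ Ioc 0 ((1 + (L p : ℝ)) * ε)}) :=
        measure_mono key
    _ ≤ ∑ p ∈ t, volume {y : EuclideanSpace ℝ (Fin (n+1)) | y ∈ ball x r ∧
        (O p) y (Fin.last n) - φ p (fun j => (O p) y j.castSucc) ∈ Ioc 0 ((1 + (L p : ℝ)) * ε)} :=
        measure_biUnion_finset_le t _
    _ ≤ ∑ p ∈ t, ENNReal.ofReal ((1 + (L p : ℝ)) * ε * (2*r)^n) :=
        Finset.sum_le_sum fun p hp =>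
          chart_vol n (O p) (φ p) (hLip p (htsub p hp)).continuous _ x r
    _ = ENNReal.ofReal (∑ p ∈ t, (1 + (L p : ℝ)) * ε * (2*r)^n) :=
        (ENNReal.ofReal_sum_of_nonneg fun p _ => by positivity).symm
    _ ≤ ENNReal.ofReal (((∑ p ∈ t, (1 + (L p : ℝ)) * 2^n) + 1) * ε * r^n) := by
        apply ENNReal.ofReal_le_ofReal
        have hsum : ∑ p ∈ t, (1 + (L p : ℝ)) * ε * (2*r)^n
            = (∑ p ∈ t, (1 + (L p : ℝ)) * 2^n) * (ε * r^n) := by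
          rw [Finset.sum_mul]
          exact Finset.sum_congr rfl fun p _ => by rw [mul_pow]; ring
        rw [hsum]
        have h1 : (∑ p ∈ t, (1 + (L p : ℝ)) * 2^n) ≤ (∑ p ∈ t, (1 + (L p : ℝ)) * 2^n) + 1 := by
          linarith
        calc (∑ p ∈ t, (1 + (L p : ℝ)) * 2^n) * (ε * r^n)
            ≤ ((∑ p ∈ t, (1 + (L p : ℝ)) * 2^n) + 1) * (ε * r^n) :=
              mul_le_mul_of_nonneg_right h1 (by positivity)
          _ = ((∑ p ∈ t, (1 + (L p : ℝ)) * 2^n) + 1) * ε * r^n := by ring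

/-- Collar estimate on a bounded Lipschitz domain: the normalized Gaussian mass of
the inner collar `E_ε` is bounded by `c₃/√s`, uniformly in `x ∈ closure E`,
`s ∈ (0,1]` and small `ε`. -/
theorem stmt_12 (d : ℕ) (hd : 2 ≤ d) (E : Set (EuclideanSpace ℝ (Fin d)))
    (hE : IsBoundedLipschitzDomain d E) (c₂ : ℝ) (hc₂ : 0 < c₂) :
    ∃ ε₀ > (0 : ℝ), ∃ c₃ > (0 : ℝ),
      ∀ s ∈ Set.Ioc (0 : ℝ) 1, ∀ ε ∈ Set.Ioo (0 : ℝ) ε₀, ∀ x ∈ closure E,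
        (1 / ε) * ∫ y in {y ∈ E | Metric.infDist y (frontier E) < ε},
            s ^ (-(d : ℝ) / 2) * Real.exp (-c₂ * dist x y ^ 2 / s)
          ≤ c₃ / Real.sqrt s := by
  obtain ⟨n, rfl⟩ : ∃ n, d = n + 1 := ⟨d - 1, by omega⟩
  obtain ⟨ε₀, hε₀, C, hC, hvol⟩ := collar_vol n E hE
  -- the summable series
  set u : ℕ → ℝ := fun k => Real.exp (-c₂ * k^2) * (k+1)^n with hu
  have hunn : ∀ k, 0 ≤ u k := fun k => by positivity
  have husum : Summable u := by
    set ρ : ℝ := Real.exp (-c₂) with hρ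
    have hρ0 : 0 < ρ := Real.exp_pos _
    have hρ1 : ρ < 1 := Real.exp_lt_one_iff.2 (by linarith)
    have hf : Summable (fun m : ℕ => (m:ℝ)^n * ρ^m) :=
      summable_pow_mul_geometric_of_norm_lt_one n (by rw [Real.norm_eq_abs, abs_of_pos hρ0]; exact hρ1)
    have hf1 : Summable (fun k : ℕ => ((k+1:ℕ):ℝ)^n * ρ^(k+1)) :=
      hf.comp_injective (add_left_injective 1)
    have hf2 : Summable (fun k : ℕ => ρ⁻¹ * (((k+1:ℕ):ℝ)^n * ρ^(k+1))) := hf1.mul_left _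
    apply Summable.of_nonneg_of_le hunn _ hf2
    intro k
    have hexp : Real.exp (-c₂ * k^2) ≤ ρ^k := by
      rw [hρ, ← Real.exp_nat_mul]
      apply Real.exp_le_exp.2
      have hkk : k ≤ k^2 := Nat.le_self_pow (by norm_num) k
      have : (k:ℝ) ≤ (k:ℝ)^2 := by exact_mod_cast hkk
      nlinarith
    have : ρ⁻¹ * (((k+1:ℕ):ℝ)^n * ρ^(k+1)) = ((k+1:ℕ):ℝ)^n * ρ^k := by
      rw [pow_succ]; field_simp
    rw [this]
    push_cast
    calc u k ≤ ρ^k * (k+1)^n := by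
          apply mul_le_mul_of_nonneg_right hexp (by positivity)
      _ = ((k:ℝ)+1)^n * ρ^k := by ring
  set S : ℝ := ∑' k, u k with hS
  have hS1 : (1:ℝ) ≤ S := by
    have h0 : u 0 = 1 := by simp [hu]
    calc (1:ℝ) = u 0 := h0.symm
      _ ≤ S := Summable.le_tsum husum 0 (fun i _ => hunn i)
  have hSpos : 0 < S := lt_of_lt_of_le one_pos hS1
  refine ⟨ε₀, hε₀, C * S, by positivity, ?_⟩
  rintro s ⟨hs0, hs1⟩ ε ⟨hε0', hεlt⟩ x hx
  set q : ℝ := Real.sqrt s with hq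
  have hq0 : 0 < q := Real.sqrt_pos.2 hs0
  set Eε : Set (EuclideanSpace ℝ (Fin (n+1))) := {y ∈ E | infDist y (frontier E) < ε} with hEε
  have hEεm : MeasurableSet Eε :=
    hE.1.measurableSet.inter ((continuous_infDist_pt (frontier E)).measurable measurableSet_Iio)
  set F : EuclideanSpace ℝ (Fin (n+1)) → ℝ :=
    fun y => s ^ ((-((n+1:ℕ)):ℝ) / 2) * Real.exp (-c₂ * dist x y ^ 2 / s) with hF
  have hFnn : ∀ y, 0 ≤ F y := fun y => by positivity
  set B : ℝ := ε * (C * S / q) with hB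
  have hBnn : 0 ≤ B := by positivity
  -- the lintegral bound
  have K : ∫⁻ y in Eε, ENNReal.ofReal (F y) ≤ ENNReal.ofReal B := by
    set A : ℕ → Set (EuclideanSpace ℝ (Fin (n+1))) :=
      fun k => Eε ∩ (ball x ((k+1)*q) \ ball x (k*q)) with hA
    have hcov : Eε ⊆ ⋃ k, A k := by
      intro y hy
      refine mem_iUnion.2 ⟨⌊dist y x / q⌋₊, hy, ?_, ?_⟩
      · rw [mem_ball]
        have h1 : dist y x / q < ⌊dist y x / q⌋₊ + 1 := Nat.lt_floor_add_one _
        rw [div_lt_iff₀ hq0] at h1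
        calc dist y x < (⌊dist y x / q⌋₊ + 1) * q := h1
          _ = (↑⌊dist y x / q⌋₊ + 1) * q := by norm_cast
      · rw [mem_ball, not_lt]
        have h1 : (⌊dist y x / q⌋₊ : ℝ) ≤ dist y x / q := Nat.floor_le (by positivity)
        rw [le_div_iff₀ hq0] at h1
        exact h1
    have hAm : ∀ k, MeasurableSet (A k) :=
      fun k => hEεm.inter (measurableSet_ball.diff measurableSet_ball)
    calc ∫⁻ y in Eε, ENNReal.ofReal (F y)
        ≤ ∫⁻ y in ⋃ k, A k, ENNReal.ofReal (F y) := lintegral_mono_set hcov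
      _ ≤ ∑' k, ∫⁻ y in A k, ENNReal.ofReal (F y) := lintegral_iUnion_le _ _
      _ ≤ ∑' k, ENNReal.ofReal ((C * ε / q) * u k) := by
          apply ENNReal.tsum_le_tsum
          intro k
          have hptwise : ∀ y ∈ A k,
              ENNReal.ofReal (F y) ≤ ENNReal.ofReal (s ^ ((-((n+1:ℕ)):ℝ) / 2) * Real.exp (-c₂ * k^2)) := by
            intro y hy
            apply ENNReal.ofReal_le_ofReal
            apply mul_le_mul_of_nonneg_left _ (by positivity)
            apply Real.exp_le_exp.2
            have hyout : ¬ dist y x < k * q := fun hcon => hy.2.2 (mem_ball.2 hcon)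
            rw [not_lt] at hyout
            have hdd : (k:ℝ)^2 * s ≤ dist x y ^ 2 := by
              rw [dist_comm]
              have hq2 : q^2 = s := Real.sq_sqrt hs0.le
              nlinarith [dist_nonneg (x := y) (y := x), mul_nonneg (Nat.cast_nonneg (α := ℝ) k) hq0.le]
            rw [div_le_iff₀ hs0]
            nlinarith
          calc ∫⁻ y in A k, ENNReal.ofReal (F y)
              ≤ ∫⁻ _ in A k, ENNReal.ofReal (s ^ ((-((n+1:ℕ)):ℝ) / 2) * Real.exp (-c₂ * k^2)) :=
                setLIntegral_mono' (hAm k) hptwise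
            _ = ENNReal.ofReal (s ^ ((-((n+1:ℕ)):ℝ) / 2) * Real.exp (-c₂ * k^2)) * volume (A k) :=
                setLIntegral_const _ _
            _ ≤ ENNReal.ofReal (s ^ ((-((n+1:ℕ)):ℝ) / 2) * Real.exp (-c₂ * k^2)) *
                ENNReal.ofReal (C * ε * ((k+1)*q)^n) := by
                apply mul_le_mul_right
                refine le_trans (measure_mono ?_) (hvol ε ⟨hε0', hεlt⟩ x ((k+1)*q))
                exact inter_subset_inter_right _ (diff_subset.trans (by
                  norm_cast))
            _ = ENNReal.ofReal ((C * ε / q) * u k) := by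
                rw [← ENNReal.ofReal_mul (by positivity)]
                congr 1
                have hqpow : s ^ ((-((n+1:ℕ)):ℝ) / 2) * q ^ (n+1) = 1 := by
                  rw [hq, Real.sqrt_eq_rpow, ← Real.rpow_natCast (s ^ ((1:ℝ)/2)) (n+1),
                    ← Real.rpow_mul hs0.le, ← Real.rpow_add hs0,
                    show (-((n+1:ℕ)):ℝ) / 2 + (1:ℝ)/2 * ((n+1:ℕ):ℝ) = 0 by push_cast; ring]
                  exact Real.rpow_zero s
                simp only [hu]
                rw [mul_pow]
                generalize hT : s ^ ((-((n+1:ℕ)):ℝ) / 2) = T at hqpow ⊢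
                field_simp
                linear_combination hqpow
      _ = ENNReal.ofReal (C * ε / q) * ∑' k, ENNReal.ofReal (u k) := by
          rw [← ENNReal.tsum_mul_left]
          congr 1; funext k
          rw [← ENNReal.ofReal_mul (by positivity)]
      _ = ENNReal.ofReal (C * ε / q) * ENNReal.ofReal S := by
          rw [hS, ENNReal.ofReal_tsum_of_nonneg hunn husum]
      _ = ENNReal.ofReal B := by
          rw [← ENNReal.ofReal_mul (by positivity)]
          congr 1
          rw [hB]; ring
  -- from lintegral to integral
  have hInt : ∫ y in Eε, F y ≤ B := by
    have h1 : ENNReal.ofReal (∫ y in Eε, F y) ≤ ∫⁻ y in Eε, ENNReal.ofReal (F y) := by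
      calc ENNReal.ofReal (∫ y in Eε, F y) ≤ ‖(∫ y in Eε, F y)‖ₑ := Real.ofReal_le_enorm _
        _ ≤ ∫⁻ y in Eε, ‖F y‖ₑ := enorm_integral_le_lintegral_enorm _
        _ = ∫⁻ y in Eε, ENNReal.ofReal (F y) := by
            congr 1; funext y; exact Real.enorm_eq_ofReal (hFnn y)
    exact (ENNReal.ofReal_le_ofReal_iff hBnn).1 (h1.trans K)
  have hgoal : (1/ε) * ∫ y in Eε, F y ≤ (1/ε) * B :=
    mul_le_mul_of_nonneg_left hInt (by positivity)
  have hfin : (1/ε) * B = C * S / q := by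
    rw [hB]; field_simp
  calc (1 / ε) * ∫ y in Eε, F y ≤ (1/ε) * B := hgoal
    _ = C * S / q := hfin
    _ = C * S / Real.sqrt s := by rw [hq]
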